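/- Every k₂-Hausdorff topological space has unique sequential limits; that is, if the diagonal Δ_X is k₂-closed in X × X, and a sequence (aₙ) in X converges to both l₀ and l₁, then l₀ = l₁. -/

import Mathlib

open Set Filter Topology

universe u

/-- A subset `C` of a space `X` is k₁-closed provided for every compact subset `K` of `X`,
the intersection `C ∩ K` is closed in the subspace topology on `K`. -/
def IsK1Closed {X : Type u} [TopologicalSpace X] (C : Set X) : Prop :=
  ∀ K : Set X, IsCompact K → IsClosed ((Subtype.val : K → X) ⁻¹' C)

/-- A space is k₁-Hausdorff provided its diagonal is k₁-closed in its square. -/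
def K1Hausdorff (X : Type u) [TopologicalSpace X] : Prop :=
  IsK1Closed {p : X × X | p.1 = p.2}

/-- A space is KC provided every compact subset is closed. -/
def KCSpace (X : Type u) [TopologicalSpace X] : Prop :=
  ∀ K : Set X, IsCompact K → IsClosed K

/-- A space `X` is weakly Hausdorff provided for every compact Hausdorff space `K` and
continuous `f : K → X`, the image of `f` is closed in `X`. -/
def WeaklyHausdorff (X : Type u) [TopologicalSpace X] : Prop :=
  ∀ (K : Type u) [TopologicalSpace K] [CompactSpace K] [T2Space K]
    (f : K → X), Continuous f → IsClosed (Set.range f)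

/-- A subset `C` of `X` is k₂-closed provided for every compact Hausdorff space `K` and
continuous `f : K → X`, the preimage `f ⁻¹' C` is closed in `K`. -/
def IsK2Closed {X : Type u} [TopologicalSpace X] (C : Set X) : Prop :=
  ∀ (K : Type u) [TopologicalSpace K] [CompactSpace K] [T2Space K]
    (f : K → X), Continuous f → IsClosed (f ⁻¹' C)

/-- A space is k₂-Hausdorff provided its diagonal is k₂-closed in its square. -/
def K2Hausdorff (X : Type u) [TopologicalSpace X] : Prop :=
  IsK2Closed {p : X × X | p.1 = p.2}

/-- A space has unique sequential limits provided every convergent sequence has a unique limit. -/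
def UniqueSequentialLimits (X : Type u) [TopologicalSpace X] : Prop :=
  ∀ (a : ℕ → X) (l₀ l₁ : X),
    Filter.Tendsto a Filter.atTop (nhds l₀) →
    Filter.Tendsto a Filter.atTop (nhds l₁) → l₀ = l₁

/-- Every k₂-Hausdorff space has unique sequential limits. -/
theorem k2Hausdorff_implies_uniqueSequentialLimits (X : Type u) [TopologicalSpace X]
    (h : K2Hausdorff X) : UniqueSequentialLimits X := by
  intro a l₀ l₁ h₀ h₁
  let g : OnePoint ℕ → X × X := fun k => OnePoint.rec (l₀, l₁) (fun n => (a n, a n)) k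
  have hg : Continuous g := by
    rw [OnePoint.continuous_iff_from_nat]
    exact Tendsto.prodMk_nhds h₀ h₁
  let f : ULift.{u} (OnePoint ℕ) → X × X := fun k => g k.down
  have hf : Continuous f := hg.comp continuous_uliftDown
  have hcl : IsClosed (f ⁻¹' {p : X × X | p.1 = p.2}) := h _ f hf
  have hsub : Set.range (fun n : ℕ => (⟨(n : OnePoint ℕ)⟩ : ULift (OnePoint ℕ)))
      ⊆ f ⁻¹' {p : X × X | p.1 = p.2} := by
    rintro _ ⟨n, rfl⟩; exact rfl
  have hdense : DenseRange (fun n : ℕ => (⟨(n : OnePoint ℕ)⟩ : ULift (OnePoint ℕ))) := by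
    have h1 : DenseRange ((↑) : ℕ → OnePoint ℕ) := OnePoint.denseRange_coe
    have hu : DenseRange (ULift.up : OnePoint ℕ → ULift (OnePoint ℕ)) :=
      (Homeomorph.ulift.symm).surjective.denseRange
    exact hu.comp h1 continuous_uliftUp
  have hmem : (⟨(OnePoint.infty : OnePoint ℕ)⟩ : ULift (OnePoint ℕ)) ∈
      closure (Set.range (fun n : ℕ => (⟨(n : OnePoint ℕ)⟩ : ULift (OnePoint ℕ)))) :=
    hdense _
  exact hcl.closure_subset_iff.mpr hsub hmem
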